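/- The bounded continuous functions C_b(X) are dense in C_L(μ) with respect to the seminorm ‖c‖_L = sup_{π ∈ Π(μ)} ∫ |c| dπ. Specifically, for g ∈ C_L(μ), the truncations g_k := max(min(g, k), −k) satisfy ‖g − g_k‖_L → 0 as k → ∞. -/

import Mathlib

open MeasureTheory

/-- A coupling of the measures `μ i`. -/
def IsCoupling {ι : Type} [Fintype ι] {X : ι → Type} [∀ i, MeasurableSpace (X i)]
    (μ : ∀ i, Measure (X i)) (π : Measure (∀ i, X i)) : Prop :=
  IsProbabilityMeasure π ∧ ∀ i, π.map (fun x => x i) = μ i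

/-- Membership in `C_L(μ)`. -/
def MemCL {ι : Type} [Fintype ι] {X : ι → Type} [∀ i, TopologicalSpace (X i)]
    [∀ i, MeasurableSpace (X i)] (μ : ∀ i, Measure (X i)) (c : (∀ i, X i) → ℝ) : Prop :=
  Continuous c ∧ ∃ h : ∀ i, X i → ℝ,
    (∀ i, Continuous (h i) ∧ Integrable (h i) (μ i)) ∧
    ∀ x, |c x| ≤ ∑ i, h i (x i)

/-- The seminorm `‖c‖_L`. -/
noncomputable def normL {ι : Type} [Fintype ι] {X : ι → Type} [∀ i, TopologicalSpace (X i)]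
    [∀ i, MeasurableSpace (X i)] (μ : ∀ i, Measure (X i)) (c : (∀ i, X i) → ℝ) : ℝ :=
  sSup {r | ∃ π : Measure (∀ i, X i), IsCoupling μ π ∧ r = ∫ x, |c x| ∂π}

lemma my_pi_map_eval {ι : Type} [Fintype ι] [DecidableEq ι] {X : ι → Type}
    [∀ i, MeasurableSpace (X i)]
    (μ : ∀ i, Measure (X i)) [∀ i, IsProbabilityMeasure (μ i)] (i : ι) :
    (Measure.pi μ).map (fun x => x i) = μ i := by
  ext s hs
  rw [Measure.map_apply (measurable_pi_apply i) hs]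
  rw [show (fun x : ∀ j, X j => x i) ⁻¹' s
      = Set.pi Set.univ (Function.update (fun j => (Set.univ : Set (X j))) i s)
      from Set.eval_preimage, Measure.pi_pi]
  rw [Finset.prod_eq_single i]
  · simp
  · intro j _ hj
    simp [Function.update_of_ne hj, measure_univ]
  · simp

lemma my_trunc_abs (a k : ℝ) (hk : 0 ≤ k) :
    |a - max (min a k) (-k)| ≤ max (|a| - k) 0 := by
  rcases le_total a k with h | h
  · rcases le_total (-k) a with h' | h'
    · rw [min_eq_left h, max_eq_left h']
      simp
    · rw [min_eq_left h, max_eq_right h', abs_of_nonpos (by linarith)]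
      have ha : |a| = -a := abs_of_nonpos (by linarith)
      rw [ha]
      exact le_max_left _ _ |>.trans_eq' (by ring)
  · rw [min_eq_right h, max_eq_left (by linarith : -k ≤ k), abs_of_nonneg (by linarith)]
    have ha : |a| = a := abs_of_nonneg (by linarith)
    rw [ha] at *
    exact le_max_left _ _

/-- `C_b(X)` is dense in `C_L(μ)` for the seminorm `‖·‖_L`: the truncations
`g_k = max (min g k) (-k)` (which are bounded continuous) satisfy `‖g - g_k‖_L → 0`. -/
theorem truncations_tendsto_normL {ι : Type} [Fintype ι] {X : ι → Type}
    [∀ i, TopologicalSpace (X i)] [∀ i, PolishSpace (X i)]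
    [∀ i, MeasurableSpace (X i)] [∀ i, BorelSpace (X i)]
    (μ : ∀ i, Measure (X i)) (hμ : ∀ i, IsProbabilityMeasure (μ i))
    (g : (∀ i, X i) → ℝ) (hg : MemCL μ g) :
    Filter.Tendsto
      (fun k : ℕ => normL μ (fun x => g x - max (min (g x) (k : ℝ)) (-(k : ℝ))))
      Filter.atTop (nhds 0) := by
  classical
  haveI : ∀ i, IsProbabilityMeasure (μ i) := hμ
  obtain ⟨hgc, h, hh, hgb⟩ := hg
  set n : ℝ := (Fintype.card ι : ℝ) with hn
  set B : ℕ → ℝ := fun k => ∑ i, ∫ x, max (h i x - k / n) 0 ∂(μ i) with hB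
  have hBnonneg : ∀ k, 0 ≤ B k := fun k =>
    Finset.sum_nonneg fun i _ => integral_nonneg fun x => le_max_right _ _
  -- B tends to 0 (dominated convergence)
  have hBtendsto : Filter.Tendsto B Filter.atTop (nhds 0) := by
    have h0 : Filter.Tendsto (fun k : ℕ => ∑ i : ι, ∫ x, max (h i x - k / n) 0 ∂(μ i))
        Filter.atTop (nhds (∑ _i : ι, (0 : ℝ))) := by
      apply tendsto_finset_sum
      intro i _
      have hcard : 0 < n := by
        rw [hn]
        exact_mod_cast Fintype.card_pos_iff.mpr ⟨i⟩
      have hdiv : Filter.Tendsto (fun k : ℕ => (k : ℝ) / n) Filter.atTop Filter.atTop :=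
        (tendsto_natCast_atTop_atTop).atTop_div_const hcard
      have := tendsto_integral_of_dominated_convergence (μ := μ i)
        (F := fun k x => max (h i x - (k : ℝ) / n) 0) (f := fun _ => (0 : ℝ))
        (fun x => |h i x|)
        (fun k => (((hh i).1.sub continuous_const).max continuous_const).aestronglyMeasurable)
        ((hh i).2.abs)
        (by
          intro k
          filter_upwards with x
          rw [Real.norm_eq_abs, abs_of_nonneg (le_max_right _ _)]
          have hk0 : (0:ℝ) ≤ (k:ℝ)/n := div_nonneg (Nat.cast_nonneg _) hcard.le
          exact max_le (by linarith [le_abs_self (h i x)]) (abs_nonneg _))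
        (by
          filter_upwards with x
          have hev : ∀ᶠ (k : ℕ) in Filter.atTop, max (h i x - (k:ℝ)/n) 0 = 0 :=
            (hdiv.eventually_ge_atTop (h i x)).mono fun k hk => max_eq_right (by linarith)
          exact Filter.Tendsto.congr' (Filter.EventuallyEq.symm hev) tendsto_const_nhds)
      simpa using this
    simpa using h0
  -- key estimate for every coupling
  have key : ∀ k : ℕ, ∀ π : Measure (∀ i, X i), IsCoupling μ π →
      (∫ x, |g x - max (min (g x) (k : ℝ)) (-(k : ℝ))| ∂π) ≤ B k := by
    intro k π hπ
    haveI := hπ.1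
    have hint : ∀ i : ι, Integrable (fun x : ∀ j, X j => max (h i (x i) - (k:ℝ)/n) 0) π := by
      intro i
      have h1 : Integrable (fun x : ∀ j, X j => h i (x i)) π := by
        have h2 := (hh i).2
        rw [← hπ.2 i] at h2
        exact (integrable_map_measure (hh i).1.aestronglyMeasurable
          (measurable_pi_apply i).aemeasurable).mp h2
      exact (h1.sub (integrable_const _)).pos_part
    have hsumint : Integrable (fun x => ∑ i, max (h i (x i) - (k:ℝ)/n) 0) π :=
      integrable_finset_sum _ fun i _ => hint i
    have hpt : ∀ x, |g x - max (min (g x) (k : ℝ)) (-(k : ℝ))|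
        ≤ ∑ i, max (h i (x i) - (k:ℝ)/n) 0 := by
      intro x
      refine le_trans (my_trunc_abs (g x) (k : ℝ) (Nat.cast_nonneg k)) ?_
      rcases le_or_gt (|g x|) (k : ℝ) with hle | hlt
      · rw [max_eq_right (by linarith)]
        exact Finset.sum_nonneg fun i _ => le_max_right _ _
      · have hιne : Nonempty ι := by
          by_contra hempty
          haveI := not_nonempty_iff.mp hempty
          have h0' : (∑ i, h i (x i)) = 0 := by simp
          have hb := hgb x
          rw [h0'] at hb
          have hk0 : (0:ℝ) ≤ (k:ℝ) := Nat.cast_nonneg k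
          linarith
        have hcard : 0 < n := by
          rw [hn]
          exact_mod_cast Fintype.card_pos_iff.mpr hιne
        rw [max_eq_left (by linarith)]
        have hsum : (∑ _i : ι, (k:ℝ)/n) = (k:ℝ) := by
          rw [Finset.sum_const, Finset.card_univ, nsmul_eq_mul]
          rw [hn] at hcard ⊢
          field_simp
        calc |g x| - (k:ℝ) ≤ (∑ i, h i (x i)) - ∑ _i : ι, (k:ℝ)/n := by
              rw [hsum]; linarith [hgb x]
          _ = ∑ i, (h i (x i) - (k:ℝ)/n) := by rw [Finset.sum_sub_distrib]
          _ ≤ ∑ i, max (h i (x i) - (k:ℝ)/n) 0 :=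
              Finset.sum_le_sum fun i _ => le_max_left _ _
    have hfint : Integrable (fun x => |g x - max (min (g x) (k : ℝ)) (-(k : ℝ))|) π := by
      refine hsumint.mono ?_ ?_
      · exact (((hgc.sub ((hgc.min continuous_const).max continuous_const))).abs).aestronglyMeasurable
      · filter_upwards with x
        rw [Real.norm_eq_abs, Real.norm_eq_abs, abs_abs]
        exact le_trans (hpt x) (le_abs_self _)
    calc (∫ x, |g x - max (min (g x) (k : ℝ)) (-(k : ℝ))| ∂π)
        ≤ ∫ x, ∑ i, max (h i (x i) - (k:ℝ)/n) 0 ∂π := integral_mono hfint hsumint hpt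
      _ = ∑ i, ∫ x, max (h i (x i) - (k:ℝ)/n) 0 ∂π := integral_finset_sum _ fun i _ => hint i
      _ = B k := by
          refine Finset.sum_congr rfl fun i _ => ?_
          rw [← hπ.2 i, integral_map (measurable_pi_apply i).aemeasurable (f := fun y => max (h i y - (k:ℝ)/n) 0)
            (((hh i).1.sub continuous_const).max continuous_const).aestronglyMeasurable]
  -- bounds on normL
  have hupp : ∀ k : ℕ, normL μ (fun x => g x - max (min (g x) (k : ℝ)) (-(k : ℝ))) ≤ B k := by
    intro k
    apply Real.sSup_le _ (hBnonneg k)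
    rintro r ⟨π, hπ, rfl⟩
    exact key k π hπ
  have hlow : ∀ k : ℕ, 0 ≤ normL μ (fun x => g x - max (min (g x) (k : ℝ)) (-(k : ℝ))) := by
    intro k
    have hmem : (∫ x, |g x - max (min (g x) (k : ℝ)) (-(k : ℝ))| ∂(Measure.pi μ)) ∈
        {r | ∃ π : Measure (∀ i, X i), IsCoupling μ π ∧
          r = ∫ x, |g x - max (min (g x) (k : ℝ)) (-(k : ℝ))| ∂π} :=
      ⟨Measure.pi μ, ⟨inferInstance, fun i => my_pi_map_eval μ i⟩, rfl⟩
    have hbdd : BddAbove {r | ∃ π : Measure (∀ i, X i), IsCoupling μ π ∧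
        r = ∫ x, |g x - max (min (g x) (k : ℝ)) (-(k : ℝ))| ∂π} := by
      refine ⟨B k, ?_⟩
      rintro r ⟨π, hπ, rfl⟩
      exact key k π hπ
    exact le_trans (integral_nonneg fun x => abs_nonneg _) (le_csSup hbdd hmem)
  exact tendsto_of_tendsto_of_tendsto_of_le_of_le tendsto_const_nhds hBtendsto hlow hupp
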